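/- Let r ≥ 1 and j ≥ 1 be integers. Suppose (t_n) is a sequence of reals with t_n ≠ t for all n and t_n → t, and (y_n) is a sequence in ℝ^r with y_n → y and ‖y_n − y‖ / |t_n − t| → 0. If q_{y_n}^{(j−1)}(t_n) = 0 for every n and q_y^{(j−1)}(t) = 0, then q_y^{(j)}(t) = 0. -/
import Mathlib


open Polynomial

/-- `q_y = ∑_{m=1}^r y_m X^m` for `y ∈ ℝ^r`. -/
noncomputable def qPoly (r : ℕ) (y : Fin r → ℝ) : Polynomial ℝ :=
  ∑ m : Fin r, C (y m) * X ^ ((m : ℕ) + 1)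

lemma iter_deriv_eval (r k : ℕ) (z : Fin r → ℝ) (s : ℝ) :
    (derivative^[k] (qPoly r z)).eval s
      = ∑ m : Fin r, z m * (derivative^[k] (X ^ ((m:ℕ)+1) : ℝ[X])).eval s := by
  simp [qPoly, iterate_derivative_sum, iterate_derivative_C_mul, eval_finset_sum]

/-- If `t_n → t` with `t_n ≠ t`, `y_n → y` with `‖y_n - y‖/|t_n - t| → 0`, and the
`(j-1)`-st derivative of `q_{y_n}` vanishes at `t_n` for every `n` as well as the
`(j-1)`-st derivative of `q_y` at `t`, then the `j`-th derivative of `q_y` vanishes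
at `t`. -/
theorem stmt1 (r j : ℕ) (hr : 1 ≤ r) (hj : 1 ≤ j) (t : ℝ) (tn : ℕ → ℝ)
    (y : Fin r → ℝ) (yn : ℕ → Fin r → ℝ)
    (htn : ∀ n, tn n ≠ t)
    (htlim : Filter.Tendsto tn Filter.atTop (nhds t))
    (hylim : Filter.Tendsto yn Filter.atTop (nhds y))
    (hratio : Filter.Tendsto (fun n => ‖yn n - y‖ / |tn n - t|) Filter.atTop (nhds 0))
    (hn : ∀ n, (derivative^[j - 1] (qPoly r (yn n))).eval (tn n) = 0)
    (hy : (derivative^[j - 1] (qPoly r y)).eval t = 0) :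
    (derivative^[j] (qPoly r y)).eval t = 0 := by
  set p := derivative^[j - 1] (qPoly r y) with hp
  have hjj : j = (j - 1) + 1 := (Nat.succ_pred_eq_of_pos hj).symm
  have hgoal : (derivative^[j] (qPoly r y)).eval t = p.derivative.eval t := by
    rw [hjj, Function.iterate_succ_apply']
  rw [hgoal]
  have hder : HasDerivAt (fun s => p.eval s) (p.derivative.eval t) t :=
    p.hasDerivAt t
  have hslope : Filter.Tendsto (slope (fun s => p.eval s) t) (nhdsWithin t {t}ᶜ)
      (nhds (p.derivative.eval t)) := hasDerivAt_iff_tendsto_slope.mp hder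
  have htn' : Filter.Tendsto tn Filter.atTop (nhdsWithin t {t}ᶜ) := by
    rw [tendsto_nhdsWithin_iff]
    exact ⟨htlim, Filter.Eventually.of_forall fun n => htn n⟩
  have h1 : Filter.Tendsto (fun n => slope (fun s => p.eval s) t (tn n)) Filter.atTop
      (nhds (p.derivative.eval t)) := hslope.comp htn'
  have hval : ∀ n, p.eval (tn n)
      = -∑ m : Fin r, (yn n m - y m) * (derivative^[j-1] (X ^ ((m:ℕ)+1) : ℝ[X])).eval (tn n) := by
    intro n
    have h0 := iter_deriv_eval r (j-1) (yn n) (tn n)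
    have h2 := iter_deriv_eval r (j-1) y (tn n)
    rw [hn n] at h0
    rw [hp, h2]
    have h3 : ∑ m : Fin r, (yn n m - y m) * (derivative^[j-1] (X ^ ((m:ℕ)+1) : ℝ[X])).eval (tn n)
        = (∑ m : Fin r, yn n m * (derivative^[j-1] (X ^ ((m:ℕ)+1) : ℝ[X])).eval (tn n))
          - ∑ m : Fin r, y m * (derivative^[j-1] (X ^ ((m:ℕ)+1) : ℝ[X])).eval (tn n) := by
      simp [sub_mul, Finset.sum_sub_distrib]
    rw [h3, ← h0]
    ring
  have hslope_eq : ∀ n, slope (fun s => p.eval s) t (tn n)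
      = -∑ m : Fin r, ((yn n m - y m) / (tn n - t))
          * (derivative^[j-1] (X ^ ((m:ℕ)+1) : ℝ[X])).eval (tn n) := by
    intro n
    have hd : tn n - t ≠ 0 := sub_ne_zero.mpr (htn n)
    rw [slope_def_field, hy, hval n]
    rw [div_eq_iff hd, sub_zero, neg_mul, neg_inj, Finset.sum_mul]
    refine Finset.sum_congr rfl fun m _ => ?_
    field_simp
  have hzero : Filter.Tendsto (fun n => -∑ m : Fin r, ((yn n m - y m) / (tn n - t))
      * (derivative^[j-1] (X ^ ((m:ℕ)+1) : ℝ[X])).eval (tn n)) Filter.atTop (nhds 0) := by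
    have hsum : Filter.Tendsto (fun n => ∑ m : Fin r, ((yn n m - y m) / (tn n - t))
        * (derivative^[j-1] (X ^ ((m:ℕ)+1) : ℝ[X])).eval (tn n)) Filter.atTop
        (nhds (∑ m : Fin r, 0 * (derivative^[j-1] (X ^ ((m:ℕ)+1) : ℝ[X])).eval t)) := by
      apply tendsto_finset_sum
      intro m _
      refine Filter.Tendsto.mul ?_
        (((derivative^[j-1] (X ^ ((m:ℕ)+1) : ℝ[X])).continuous_aeval.tendsto t).comp htlim)
      apply squeeze_zero_norm (fun n => ?_) hratio
      have h := norm_le_pi_norm (yn n - y) m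
      simp only [Real.norm_eq_abs, abs_div]
      gcongr
      simpa [Pi.sub_apply] using h
    simpa using hsum.neg
  have h1' := h1.congr (fun n => hslope_eq n)
  exact tendsto_nhds_unique h1' hzero
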